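/- Let K be a finite field of characteristic 2, G a finite group, and W a direct sum of pairwise non-isomorphic simple self-dual KG-modules. Then there exists a non-degenerate G-invariant symmetric bilinear form on W, and it is unique up to KG-isometry. -/

import Mathlib

open QuadraticMap

variable {K : Type*} [Field K] {G : Type*} [Group G]
variable {V W : Type*} [AddCommGroup V] [Module K V] [AddCommGroup W] [Module K W]

/-- `U` is a `KG`-submodule, i.e. invariant under the representation `ρ`. -/
def IsSubrep (ρ : Representation K G V) (U : Submodule K V) : Prop :=
  ∀ g : G, ∀ v ∈ U, ρ g v ∈ U

/-- The quadratic form `Q` is `G`-invariant. -/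
def GInvariantQF (ρ : Representation K G V) (Q : QuadraticForm K V) : Prop :=
  ∀ g v, Q (ρ g v) = Q v

/-- Orthogonal complement of a submodule with respect to the polarization of `Q`. -/
def qperp (Q : QuadraticForm K V) (U : Submodule K V) : Submodule K V :=
  LinearMap.BilinForm.orthogonal Q.polarBilin U

/-- `Q` is non-degenerate: the radical of its polarization is zero. -/
def QNondeg (Q : QuadraticForm K V) : Prop :=
  LinearMap.BilinForm.Nondegenerate Q.polarBilin

/-- `(V, Q)` is metabolic: there is a `KG`-submodule `N` with `N = N^⊥` and `Q(N) = 0`. -/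
def Metabolic (ρ : Representation K G V) (Q : QuadraticForm K V) : Prop :=
  ∃ N : Submodule K V, IsSubrep ρ N ∧ N = qperp Q N ∧ ∀ v ∈ N, Q v = 0

/-- `(V, Q)` is anisotropic: `Q` does not vanish on any non-zero `KG`-submodule. -/
def AnisotropicRep (ρ : Representation K G V) (Q : QuadraticForm K V) : Prop :=
  ∀ U : Submodule K V, IsSubrep ρ U → (∀ v ∈ U, Q v = 0) → U = ⊥

/-- The product (orthogonal direct sum) of two representations. -/
def prodRep (ρ : Representation K G V) (σ : Representation K G W) :
    Representation K G (V × W) :=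
  ⟨⟨fun g => (ρ g).prodMap (σ g), by ext v <;> simp⟩, fun g h => by ext v <;> simp⟩

/-- `V` is a simple `KG`-module. -/
def SimpleRep (ρ : Representation K G V) : Prop :=
  Nontrivial V ∧ ∀ U : Submodule K V, IsSubrep ρ U → U = ⊥ ∨ U = ⊤

/-- `V` is a self-dual `KG`-module. -/
def SelfDualRep (ρ : Representation K G V) : Prop :=
  ∃ f : V ≃ₗ[K] Module.Dual K V, ∀ g v, f (ρ g v) = ρ.dual g (f v)

/-- The restriction of a representation to an invariant submodule. -/
def subRep (ρ : Representation K G V) (U : Submodule K V) (hU : IsSubrep ρ U) :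
    Representation K G U :=
  ⟨⟨fun g => (ρ g).restrict (hU g),
    by ext v; simp [LinearMap.restrict_apply]⟩,
    fun g h => by ext v; simp [LinearMap.restrict_apply]⟩


lemma subRep_coe (ρ : Representation K G V) (U : Submodule K V) (hU : IsSubrep ρ U)
    (g : G) (u : U) : (subRep ρ U hU g u : V) = ρ g (u : V) := rfl

lemma rep_apply_inv {M : Type*} [AddCommGroup M] [Module K M]
    (τ : Representation K G M) (g : G) (v : M) : τ g (τ g⁻¹ v) = v := by
  rw [← Module.End.mul_apply, ← map_mul, mul_inv_cancel, map_one, Module.End.one_apply]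

lemma rep_inv_apply {M : Type*} [AddCommGroup M] [Module K M]
    (τ : Representation K G M) (g : G) (v : M) : τ g⁻¹ (τ g v) = v := by
  rw [← Module.End.mul_apply, ← map_mul, inv_mul_cancel, map_one, Module.End.one_apply]

lemma schur_ker {M : Type*} [AddCommGroup M] [Module K M]
    (ρ : Representation K G V) (U : Submodule K V) (hU : IsSubrep ρ U)
    (hs : ∀ N : Submodule K V, N ≤ U → IsSubrep ρ N → N = ⊥ ∨ N = U)
    (τ : Representation K G M) (T : U →ₗ[K] M)
    (hT : ∀ g u, T (subRep ρ U hU g u) = τ g (T u)) :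
    T = 0 ∨ Function.Injective T := by
  set N : Submodule K V := (LinearMap.ker T).map U.subtype with hN
  have hNle : N ≤ U := Submodule.map_subtype_le _ _
  have hNsub : IsSubrep ρ N := by
    intro g v hv
    obtain ⟨u, hu, rfl⟩ := Submodule.mem_map.mp hv
    refine Submodule.mem_map.mpr ⟨subRep ρ U hU g u, ?_, rfl⟩
    simp only [LinearMap.mem_ker] at hu ⊢
    rw [hT, hu, map_zero]
  rcases hs N hNle hNsub with h | h
  · right
    rw [← LinearMap.ker_eq_bot]
    rw [eq_bot_iff] at h ⊢
    intro u hu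
    have : (u : V) ∈ N := Submodule.mem_map.mpr ⟨u, hu, rfl⟩
    have := h this
    simp only [Submodule.mem_bot] at this ⊢
    exact Subtype.ext this
  · left
    refine LinearMap.ext fun u => ?_
    have : (u : V) ∈ N := by rw [h]; exact u.2
    obtain ⟨u', hu', h'⟩ := Submodule.mem_map.mp this
    have : u' = u := Subtype.ext h'
    subst this
    simpa using hu'

lemma schur_zero (ρ : Representation K G V) (U₁ U₂ : Submodule K V)
    (hU₁ : IsSubrep ρ U₁) (hU₂ : IsSubrep ρ U₂)
    (hs₁ : ∀ N : Submodule K V, N ≤ U₁ → IsSubrep ρ N → N = ⊥ ∨ N = U₁)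
    (hs₂ : ∀ N : Submodule K V, N ≤ U₂ → IsSubrep ρ N → N = ⊥ ∨ N = U₂)
    (hni : ¬∃ f : U₁ ≃ₗ[K] U₂,
      ∀ g u, f (subRep ρ U₁ hU₁ g u) = subRep ρ U₂ hU₂ g (f u))
    (T : U₁ →ₗ[K] U₂)
    (hT : ∀ g u, T (subRep ρ U₁ hU₁ g u) = subRep ρ U₂ hU₂ g (T u)) :
    T = 0 := by
  rcases schur_ker ρ U₁ hU₁ hs₁ (subRep ρ U₂ hU₂) T hT with h | hinj
  · exact h
  set N : Submodule K V := (LinearMap.range T).map U₂.subtype with hN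
  have hNle : N ≤ U₂ := Submodule.map_subtype_le _ _
  have hNsub : IsSubrep ρ N := by
    intro g v hv
    obtain ⟨w, hw, rfl⟩ := Submodule.mem_map.mp hv
    obtain ⟨u, rfl⟩ := LinearMap.mem_range.mp hw
    refine Submodule.mem_map.mpr ⟨T (subRep ρ U₁ hU₁ g u), LinearMap.mem_range_self _ _, ?_⟩
    rw [hT]; rfl
  rcases hs₂ N hNle hNsub with h | h
  · refine LinearMap.ext fun u => ?_
    have : ((T u : V)) ∈ N := Submodule.mem_map.mpr ⟨T u, LinearMap.mem_range_self _ _, rfl⟩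
    rw [h] at this
    simp only [Submodule.mem_bot] at this
    simpa using Subtype.ext this
  · have hsurj : Function.Surjective T := by
      intro w
      have : (w : V) ∈ N := by rw [h]; exact w.2
      obtain ⟨w', hw', h'⟩ := Submodule.mem_map.mp this
      obtain ⟨u, rfl⟩ := LinearMap.mem_range.mp hw'
      exact ⟨u, Subtype.ext h'⟩
    exact absurd ⟨LinearEquiv.ofBijective T ⟨hinj, hsurj⟩, hT⟩ hni

lemma block_sepLeft (ρ : Representation K G V) (U : Submodule K V) (hU : IsSubrep ρ U)
    (hs : ∀ N : Submodule K V, N ≤ U → IsSubrep ρ N → N = ⊥ ∨ N = U)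
    (b : LinearMap.BilinForm K U) (hb0 : b ≠ 0)
    (hbinv : ∀ g u v, b (subRep ρ U hU g u) (subRep ρ U hU g v) = b u v) :
    b.SeparatingLeft := by
  have key : ∀ (g : G) (u : U), b u = 0 → b (subRep ρ U hU g u) = 0 := by
    intro g u hu
    ext v
    have := hbinv g u ((subRep ρ U hU) g⁻¹ v)
    rw [hu] at this
    simpa [rep_apply_inv (subRep ρ U hU) g v] using this
  set N : Submodule K V := (LinearMap.ker b).map U.subtype with hN
  have hNle : N ≤ U := Submodule.map_subtype_le _ _
  have hNsub : IsSubrep ρ N := by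
    intro g v hv
    obtain ⟨u, hu, rfl⟩ := Submodule.mem_map.mp hv
    exact Submodule.mem_map.mpr ⟨subRep ρ U hU g u, key g u hu, rfl⟩
  rcases hs N hNle hNsub with h | h
  · intro u hu
    have hbu : b u = 0 := by ext v; exact hu v
    have : (u : V) ∈ N := Submodule.mem_map.mpr ⟨u, hbu, rfl⟩
    rw [h] at this
    simpa using Subtype.ext (by simpa using this : (u : V) = 0)
  · exfalso
    apply hb0
    refine LinearMap.ext fun u => LinearMap.ext fun v => ?_
    have : (u : V) ∈ N := by rw [h]; exact u.2
    obtain ⟨u', hu', h'⟩ := Submodule.mem_map.mp this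
    have : u' = u := Subtype.ext h'
    subst this
    simp only [LinearMap.mem_ker] at hu'
    simp [hu']

lemma block_nondeg (ρ : Representation K G V) (U : Submodule K V) (hU : IsSubrep ρ U)
    (hs : ∀ N : Submodule K V, N ≤ U → IsSubrep ρ N → N = ⊥ ∨ N = U)
    (b : LinearMap.BilinForm K U) (hb0 : b ≠ 0)
    (hbinv : ∀ g u v, b (subRep ρ U hU g u) (subRep ρ U hU g v) = b u v) :
    b.Nondegenerate :=
  ⟨block_sepLeft ρ U hU hs b hb0 hbinv,
    block_sepLeft ρ U hU hs b.flip
      (fun h => hb0 (LinearMap.ext fun u => LinearMap.ext fun v => by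
        simpa using congrArg (fun T : LinearMap.BilinForm K U => T v u) h))
      (fun g u v => hbinv g v u)⟩

lemma char2_addself {M : Type*} [AddCommGroup M] [Module K M]
    (hK2 : (1:K) + 1 = 0) (x : M) : x + x = 0 := by
  have : ((1:K) + 1) • x = 0 := by rw [hK2, zero_smul]
  rwa [add_smul, one_smul] at this

lemma char2_eq_of_add_eq_zero {M : Type*} [AddCommGroup M] [Module K M]
    (hK2 : (1:K) + 1 = 0) {x y : M} (h : x + y = 0) : x = y := by
  have h2 := char2_addself (M := M) hK2 y
  exact add_right_cancel (h.trans h2.symm)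

section Decomp

variable {r : ℕ} (S : Fin r → Submodule K V) (hint : DirectSum.IsInternal S)

noncomputable def dpi (i : Fin r) : V →ₗ[K] ↥(S i) :=
  (DirectSum.component K (Fin r) (fun j => ↥(S j)) i) ∘ₗ
    (LinearEquiv.ofBijective (DirectSum.coeLinearMap S) hint).symm.toLinearMap

lemma dpi_same (i : Fin r) (u : ↥(S i)) : dpi S hint i (u : V) = u := by
  simp [dpi, ← DirectSum.apply_eq_component, hint.ofBijective_coeLinearMap_same u]

lemma dpi_ne {i j : Fin r} (hij : i ≠ j) (u : ↥(S i)) : dpi S hint j (u : V) = 0 := by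
  simpa [dpi, ← DirectSum.apply_eq_component] using
    hint.ofBijective_coeLinearMap_of_ne hij u

lemma dpi_sum (v : V) : ∑ i, (dpi S hint i v : V) = v := by
  set ε := LinearEquiv.ofBijective (DirectSum.coeLinearMap S) hint with hε
  have h1 : ∀ i, dpi S hint i v = ε.symm v i := fun i => rfl
  have h2 : v = DirectSum.coeLinearMap S (ε.symm v) := (ε.apply_symm_apply v).symm
  calc ∑ i, (dpi S hint i v : V) = ∑ i, ((ε.symm v i : V)) := by simp [h1]
    _ = ∑ i, DirectSum.coeLinearMap S (DirectSum.of (fun j => ↥(S j)) i (ε.symm v i)) := by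
        simp [DirectSum.coeLinearMap_of]
    _ = DirectSum.coeLinearMap S (∑ i, DirectSum.of (fun j => ↥(S j)) i (ε.symm v i)) := by
        rw [map_sum]
    _ = v := by rw [DirectSum.sum_univ_of]; exact h2.symm

lemma dpi_rho (ρ : Representation K G V) (hS : ∀ i, IsSubrep ρ (S i))
    (i : Fin r) (g : G) (v : V) :
    dpi S hint i (ρ g v) = subRep ρ (S i) (hS i) g (dpi S hint i v) := by
  have hv : ρ g v = ∑ j, ((subRep ρ (S j) (hS j) g (dpi S hint j v) : V)) := by
    conv_lhs => rw [← dpi_sum S hint v]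
    rw [map_sum]
    rfl
  rw [hv, map_sum, Finset.sum_eq_single i]
  · exact dpi_same S hint i _
  · intro j _ hji
    exact dpi_ne S hint hji _
  · intro h
    exact absurd (Finset.mem_univ i) h

end Decomp

lemma block_form (hK2 : (1:K) + 1 = 0) (ρ : Representation K G V) (U : Submodule K V)
    (hU : IsSubrep ρ U) (hne : U ≠ ⊥)
    (hs : ∀ N : Submodule K V, N ≤ U → IsSubrep ρ N → N = ⊥ ∨ N = U)
    (hsd : SelfDualRep (subRep ρ U hU)) :
    ∃ b : LinearMap.BilinForm K U, b.Nondegenerate ∧ (∀ u v, b u v = b v u) ∧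
      (∀ g u v, b (subRep ρ U hU g u) (subRep ρ U hU g v) = b u v) := by
  obtain ⟨f, hf⟩ := hsd
  have hinv : ∀ (g : G) (u v : U),
      f (subRep ρ U hU g u) (subRep ρ U hU g v) = f u v := by
    intro g u v
    rw [hf g u]
    show (f u) (subRep ρ U hU g⁻¹ (subRep ρ U hU g v)) = f u v
    rw [rep_inv_apply]
  have hnz : (f.toLinearMap : LinearMap.BilinForm K U) ≠ 0 := by
    obtain ⟨x, hx, hx0⟩ := Submodule.exists_mem_ne_zero_of_ne_bot hne
    intro h
    have : f ⟨x, hx⟩ = 0 := by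
      have := congrArg (fun T : LinearMap.BilinForm K U => T ⟨x, hx⟩) h
      simpa using this
    exact hx0 (by simpa using congrArg (Subtype.val) (f.map_eq_zero_iff.mp this))
  by_cases hsymm : ∀ u v : U, f u v = f v u
  · exact ⟨f.toLinearMap, block_nondeg ρ U hU hs _ hnz hinv, hsymm, hinv⟩
  · refine ⟨f.toLinearMap + (f.toLinearMap : LinearMap.BilinForm K U).flip,
      block_nondeg ρ U hU hs _ ?_ ?_, ?_, ?_⟩
    · intro h
      apply hsymm
      intro u v
      have := congrArg (fun T : LinearMap.BilinForm K U => T u v) h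
      simp only [LinearMap.add_apply, LinearMap.flip_apply, LinearMap.zero_apply] at this
      exact char2_eq_of_add_eq_zero hK2 this
    · intro g u v
      simp only [LinearMap.add_apply, LinearMap.flip_apply, LinearEquiv.coe_coe]
      rw [hinv, hinv]
    · intro u v
      simp only [LinearMap.add_apply, LinearMap.flip_apply]
      rw [add_comm]
    · intro g u v
      simp only [LinearMap.add_apply, LinearMap.flip_apply, LinearEquiv.coe_coe]
      rw [hinv, hinv]

/-- if `W` is a direct sum of pairwise non-isomorphic simple self-dual
`KG`-modules then there is a non-degenerate `G`-invariant symmetric bilinear form on `W`,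
unique up to `KG`-isometry. -/
theorem stmt12 [Fintype K] (h2 : ringChar K = 2) [Finite G] [FiniteDimensional K V]
    (ρ : Representation K G V)
    (r : ℕ) (S : Fin r → Submodule K V) (hint : DirectSum.IsInternal S)
    (hS : ∀ i, IsSubrep ρ (S i))
    (hsimple : ∀ i, S i ≠ ⊥ ∧
      ∀ U : Submodule K V, U ≤ S i → IsSubrep ρ U → U = ⊥ ∨ U = S i)
    (hsd : ∀ i, SelfDualRep (subRep ρ (S i) (hS i)))
    (hnoniso : ∀ i j, i ≠ j → ¬∃ f : S i ≃ₗ[K] S j,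
      ∀ g u, f (subRep ρ (S i) (hS i) g u) = subRep ρ (S j) (hS j) g (f u)) :
    (∃ B : LinearMap.BilinForm K V, LinearMap.BilinForm.Nondegenerate B ∧
      (∀ v w, B v w = B w v) ∧ (∀ g v w, B (ρ g v) (ρ g w) = B v w)) ∧
    ∀ B B' : LinearMap.BilinForm K V,
      LinearMap.BilinForm.Nondegenerate B → (∀ v w, B v w = B w v) →
        (∀ g v w, B (ρ g v) (ρ g w) = B v w) →
      LinearMap.BilinForm.Nondegenerate B' → (∀ v w, B' v w = B' w v) →
        (∀ g v w, B' (ρ g v) (ρ g w) = B' v w) →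
      ∃ e : V ≃ₗ[K] V, (∀ g v, e (ρ g v) = ρ g (e v)) ∧ ∀ v w, B' (e v) (e w) = B v w := by
  classical
  haveI hchar : CharP K 2 := h2 ▸ ringChar.charP K
  have hK2 : (1 : K) + 1 = 0 := by
    have := CharP.cast_eq_zero K 2
    rwa [Nat.cast_ofNat, ← one_add_one_eq_two] at this
  set π : ∀ i : Fin r, V →ₗ[K] ↥(S i) := fun i => dpi S hint i with hπdef
  have hπ_same : ∀ (i : Fin r) (u : ↥(S i)), π i (u : V) = u := fun i u => dpi_same S hint i u
  have hπ_ne : ∀ {i j : Fin r}, i ≠ j → ∀ u : ↥(S i), π j (u : V) = 0 :=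
    fun hij u => dpi_ne S hint hij u
  have hπ_sum : ∀ v : V, ∑ i, (π i v : V) = v := dpi_sum S hint
  have hπ_ρ : ∀ (i : Fin r) (g : G) (v : V),
      π i (ρ g v) = subRep ρ (S i) (hS i) g (π i v) := dpi_rho S hint ρ hS
  have hb := fun i => block_form hK2 ρ (S i) (hS i) (hsimple i).1 (hsimple i).2 (hsd i)
  choose b hbnd hbsymm hbinv using hb
  constructor
  · -- Existence
    set Bex : LinearMap.BilinForm K V := ∑ i, (b i).compl₁₂ (π i) (π i) with hBexdef
    have hBex_apply : ∀ v w, Bex v w = ∑ i, b i (π i v) (π i w) := by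
      intro v w
      simp [hBexdef, LinearMap.sum_apply, LinearMap.compl₁₂_apply]
    refine ⟨Bex, ?_, ?_, ?_⟩
    · refine (LinearMap.IsRefl.nondegenerate_iff_separatingLeft
        (fun v w h => by
          rw [hBex_apply] at h ⊢; rw [← h]; exact Finset.sum_congr rfl fun i _ => hbsymm i _ _)).2 ?_
      intro v hv
      have hπv : ∀ i, π i v = 0 := by
        intro i
        apply (hbnd i).1
        intro u
        have h0 := hv (u : V)
        rw [hBex_apply, Finset.sum_eq_single i] at h0
        · rwa [hπ_same] at h0
        · intro j _ hji
          rw [hπ_ne (Ne.symm hji) u, map_zero]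
        · intro h; exact absurd (Finset.mem_univ i) h
      rw [← hπ_sum v]
      simp [hπv]
    · intro v w
      rw [hBex_apply, hBex_apply]
      exact Finset.sum_congr rfl fun i _ => hbsymm i _ _
    · intro g v w
      rw [hBex_apply, hBex_apply]
      refine Finset.sum_congr rfl fun i _ => ?_
      rw [hπ_ρ, hπ_ρ, hbinv]
  · -- Uniqueness
    intro B B' hB hBsymm hBinv hB' hB'symm hB'inv
    have hρinv : ∀ (C : LinearMap.BilinForm K V),
        (∀ g v w, C (ρ g v) (ρ g w) = C v w) →
        ∀ g v w, C (ρ g v) w = C v (ρ g⁻¹ w) := by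
      intro C hC g v w
      conv_lhs => rw [← rep_apply_inv ρ g w]
      rw [hC]
    have horth : ∀ (C : LinearMap.BilinForm K V),
        (∀ g v w, C (ρ g v) (ρ g w) = C v w) →
        ∀ i j, i ≠ j → ∀ (u : ↥(S i)) (v : ↥(S j)), C (u : V) (v : V) = 0 := by
      intro C hC i j hij u v
      obtain ⟨f, hf⟩ := hsd j
      set P : ↥(S i) →ₗ[K] Module.Dual K ↥(S j) :=
        C.compl₁₂ (S i).subtype (S j).subtype with hPdef
      have hP : ∀ g u, P (subRep ρ (S i) (hS i) g u) =
          (subRep ρ (S j) (hS j)).dual g (P u) := by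
        intro g u
        refine LinearMap.ext fun w => ?_
        show C (ρ g (u : V)) (w : V) = P u (subRep ρ (S j) (hS j) g⁻¹ w)
        rw [hρinv C hC]
        rfl
      set T : ↥(S i) →ₗ[K] ↥(S j) := f.symm.toLinearMap ∘ₗ P with hTdef
      have hT : ∀ g u, T (subRep ρ (S i) (hS i) g u) =
          subRep ρ (S j) (hS j) g (T u) := by
        intro g u
        show f.symm (P (subRep ρ (S i) (hS i) g u)) = subRep ρ (S j) (hS j) g (f.symm (P u))
        rw [hP]
        apply f.injective
        rw [LinearEquiv.apply_symm_apply, hf, LinearEquiv.apply_symm_apply]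
      have hT0 : T = 0 := schur_zero ρ (S i) (S j) (hS i) (hS j)
        (hsimple i).2 (hsimple j).2 (hnoniso i j hij) T hT
      have hP0 : P u = 0 := by
        have h1 : f (T u) = P u := by
          show f (f.symm (P u)) = P u
          exact f.apply_symm_apply _
        rw [hT0] at h1
        simpa using h1.symm
      have := congrArg (fun φ : Module.Dual K ↥(S j) => φ v) hP0
      simpa [hPdef] using this
    set e0 : V ≃ₗ[K] V :=
      (LinearMap.BilinForm.toDual B hB).trans (LinearMap.BilinForm.toDual B' hB').symm
      with he0def
    have he0 : ∀ v w, B' (e0 v) w = B v w := by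
      intro v w
      have h1 : (LinearMap.BilinForm.toDual B' hB') (e0 v) =
          (LinearMap.BilinForm.toDual B hB) v := by
        simp [he0def]
      calc B' (e0 v) w = (LinearMap.BilinForm.toDual B' hB') (e0 v) w := by
            rw [LinearMap.BilinForm.toDual_def]
        _ = (LinearMap.BilinForm.toDual B hB) v w := by rw [h1]
        _ = B v w := by rw [LinearMap.BilinForm.toDual_def]
    have hB'cancel : ∀ x y : V, (∀ w, B' x w = B' y w) → x = y := by
      intro x y h
      have h0 : ∀ w, B' (x - y) w = 0 := by
        intro w
        rw [_root_.map_sub, LinearMap.sub_apply, h w, sub_self]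
      have := hB'.1 (x - y) h0
      exact sub_eq_zero.mp this
    have he0ρ : ∀ g v, e0 (ρ g v) = ρ g (e0 v) := by
      intro g v
      apply hB'cancel
      intro w
      calc B' (e0 (ρ g v)) w = B (ρ g v) w := he0 _ _
        _ = B v (ρ g⁻¹ w) := hρinv B hBinv g v w
        _ = B' (e0 v) (ρ g⁻¹ w) := (he0 _ _).symm
        _ = B' (ρ g (e0 v)) w := (hρinv B' hB'inv g (e0 v) w).symm
    -- block structure of e0
    have heij : ∀ {i j : Fin r}, i ≠ j → ∀ u : ↥(S i), π j (e0 (u : V)) = 0 := by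
      intro i j hij
      set T : ↥(S i) →ₗ[K] ↥(S j) := (π j) ∘ₗ (e0 : V →ₗ[K] V) ∘ₗ (S i).subtype with hTdef
      have hT : ∀ g u, T (subRep ρ (S i) (hS i) g u) =
          subRep ρ (S j) (hS j) g (T u) := by
        intro g u
        show π j (e0 (ρ g (u : V))) = subRep ρ (S j) (hS j) g (π j (e0 (u : V)))
        rw [he0ρ, hπ_ρ]
      have hT0 : T = 0 := schur_zero ρ (S i) (S j) (hS i) (hS j)
        (hsimple i).2 (hsimple j).2 (hnoniso i j hij) T hT
      intro u
      exact congrArg (fun T : ↥(S i) →ₗ[K] ↥(S j) => T u) hT0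
    set ei : ∀ i : Fin r, Module.End K ↥(S i) :=
      fun i => (π i) ∘ₗ (e0 : V →ₗ[K] V) ∘ₗ (S i).subtype with heidef
    have hei_coe : ∀ (i : Fin r) (u : ↥(S i)), (ei i u : V) = e0 (u : V) := by
      intro i u
      conv_rhs => rw [← hπ_sum (e0 (u : V))]
      rw [Finset.sum_eq_single i]
      · rfl
      · intro j _ hji
        rw [heij (Ne.symm hji) u]
        rfl
      · intro h; exact absurd (Finset.mem_univ i) h
    have hei_rel : ∀ (i : Fin r) (u v : ↥(S i)),
        B' (ei i u : V) (v : V) = B (u : V) (v : V) := by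
      intro i u v
      rw [hei_coe, he0]
    have hei_comm : ∀ (i : Fin r) (g : G) (u : ↥(S i)),
        ei i (subRep ρ (S i) (hS i) g u) = subRep ρ (S i) (hS i) g (ei i u) := by
      intro i g u
      show π i (e0 (ρ g (u : V))) = subRep ρ (S i) (hS i) g (π i (e0 (u : V)))
      rw [he0ρ, hπ_ρ]
    -- square roots on each block
    have hsqrt : ∀ i : Fin r, ∃ s : Module.End K ↥(S i),
        (s * s = ei i) ∧ (∀ g u, s (subRep ρ (S i) (hS i) g u) =
          subRep ρ (S i) (hS i) g (s u)) ∧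
        (∀ u v : ↥(S i), B' (s u : V) (v : V) = B' (u : V) (s v : V)) := by
      intro i
      haveI : Finite (Module.End K ↥(S i)) := Module.finite_of_finite K
      have hinj : ∀ c : Module.End K ↥(S i),
          (∀ g u, c (subRep ρ (S i) (hS i) g u) = subRep ρ (S i) (hS i) g (c u)) →
          c ≠ 0 → Function.Injective c := by
        intro c hc hc0
        rcases schur_ker ρ (S i) (hS i) (hsimple i).2 (subRep ρ (S i) (hS i)) c hc with h | h
        · exact absurd h hc0
        · exact h
      have hpow_comm : ∀ (n : ℕ) (g : G) (u : ↥(S i)),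
          ((ei i) ^ n) (subRep ρ (S i) (hS i) g u) =
            subRep ρ (S i) (hS i) g (((ei i) ^ n) u) := by
        intro n
        induction n with
        | zero => intro g u; simp
        | succ n ih =>
          intro g u
          rw [pow_succ, Module.End.mul_apply, Module.End.mul_apply, hei_comm, ih]
      have hPcomm : ∀ (p : Polynomial K) (g : G) (u : ↥(S i)),
          (Polynomial.aeval (ei i) p) (subRep ρ (S i) (hS i) g u) =
            subRep ρ (S i) (hS i) g ((Polynomial.aeval (ei i) p) u) := by
        intro p
        induction p using Polynomial.induction_on' with
        | add p q hp hq =>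
          intro g u
          rw [map_add, LinearMap.add_apply, LinearMap.add_apply, hp, hq, map_add]
        | monomial n a =>
          intro g u
          rw [Polynomial.aeval_monomial]
          simp only [Module.End.mul_apply, Module.algebraMap_end_apply]
          rw [hpow_comm, _root_.map_smul]
      have hei_sa : ∀ u v : ↥(S i), B' (ei i u : V) (v : V) = B' (u : V) (ei i v : V) := by
        intro u v
        rw [hei_rel, hBsymm, ← hei_rel i v u, hB'symm]
      have hpow_sa : ∀ (n : ℕ) (u v : ↥(S i)),
          B' ((((ei i) ^ n) u : ↥(S i)) : V) (v : V) =
            B' (u : V) ((((ei i) ^ n) v : ↥(S i)) : V) := by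
        intro n
        induction n with
        | zero => intro u v; simp
        | succ n ih =>
          intro u v
          rw [pow_succ, Module.End.mul_apply, Module.End.mul_apply, ih, hei_sa,
            ← Module.End.mul_apply, ← Module.End.mul_apply, ← pow_succ', ← pow_succ]
      have hPsa : ∀ (p : Polynomial K) (u v : ↥(S i)),
          B' ((Polynomial.aeval (ei i) p) u : V) (v : V) =
            B' (u : V) ((Polynomial.aeval (ei i) p) v : V) := by
        intro p
        induction p using Polynomial.induction_on' with
        | add p q hp hq =>
          intro u v
          have h1 : (((Polynomial.aeval (ei i)) (p + q)) u : V) =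
              (((Polynomial.aeval (ei i)) p) u : V) + (((Polynomial.aeval (ei i)) q) u : V) := by
            rw [_root_.map_add]; rfl
          have h2 : (((Polynomial.aeval (ei i)) (p + q)) v : V) =
              (((Polynomial.aeval (ei i)) p) v : V) + (((Polynomial.aeval (ei i)) q) v : V) := by
            rw [_root_.map_add]; rfl
          rw [h1, h2, _root_.map_add, LinearMap.add_apply, map_add (B' (u : V)), hp, hq]
        | monomial n a =>
          intro u v
          rw [Polynomial.aeval_monomial]
          simp only [Module.End.mul_apply, Module.algebraMap_end_apply, SetLike.val_smul]
          rw [LinearMap.map_smul₂, (B' _).map_smul, hpow_sa]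
      set A : Set (Module.End K ↥(S i)) :=
        Set.range (fun p : Polynomial K => Polynomial.aeval (ei i) p) with hAdef
      haveI : Finite A := Subtype.finite
      let sq : A → A := fun a =>
        ⟨a.1 * a.1, by
          obtain ⟨p, hp⟩ := a.2
          have hp' : Polynomial.aeval (ei i) p = a.1 := hp
          exact ⟨p * p, by show Polynomial.aeval (ei i) (p * p) = a.1 * a.1
                           rw [map_mul, hp']⟩⟩
      have hsqinj : Function.Injective sq := by
        intro a c hac
        have h1 : a.1 * a.1 = c.1 * c.1 := congrArg Subtype.val hac
        obtain ⟨p, hp0⟩ := a.2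
        obtain ⟨q, hq0⟩ := c.2
        have hp : Polynomial.aeval (ei i) p = a.1 := hp0
        have hq : Polynomial.aeval (ei i) q = c.1 := hq0
        have hcomm : a.1 * c.1 = c.1 * a.1 := by
          rw [← hp, ← hq, ← map_mul, ← map_mul, mul_comm]
        have hcc : (a.1 + c.1) * (a.1 + c.1) = 0 := by
          have expand : (a.1 + c.1) * (a.1 + c.1) =
              a.1 * a.1 + (a.1 * c.1 + a.1 * c.1) + c.1 * c.1 := by
            rw [add_mul, mul_add, mul_add]
            rw [← hcomm]
            abel
          rw [expand, char2_addself hK2 (a.1 * c.1), add_zero, h1,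
            char2_addself hK2 (c.1 * c.1)]
        by_cases hc0 : a.1 + c.1 = 0
        · exact Subtype.ext (char2_eq_of_add_eq_zero hK2 hc0)
        · exfalso
          have hceq : a.1 + c.1 = Polynomial.aeval (ei i) (p + q) := by
            rw [map_add, hp, hq]
          have hinjc : Function.Injective (a.1 + c.1) :=
            hinj _ (by rw [hceq]; exact hPcomm (p + q)) hc0
          obtain ⟨x, hx, hx0⟩ := Submodule.exists_mem_ne_zero_of_ne_bot (hsimple i).1
          have hz : (a.1 + c.1) ((a.1 + c.1) ⟨x, hx⟩) = (a.1 + c.1) ((a.1 + c.1) 0) := by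
            rw [← Module.End.mul_apply, hcc]
            simp
          have := hinjc (hinjc hz)
          apply hx0
          simpa using congrArg Subtype.val this
      have hsqsurj : Function.Surjective sq :=
        Finite.injective_iff_surjective.mp hsqinj
      obtain ⟨⟨s, hsA⟩, hs⟩ := hsqsurj ⟨ei i, ⟨Polynomial.X, by simp⟩⟩
      obtain ⟨p, hp0⟩ := hsA
      have hp : Polynomial.aeval (ei i) p = s := hp0
      refine ⟨s, congrArg Subtype.val hs, ?_, ?_⟩
      · intro g u
        rw [← hp]
        exact hPcomm p g u
      · intro u v
        rw [← hp]
        exact hPsa p u v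
    choose s hss hscomm hssa using hsqrt
    set sg : V →ₗ[K] V := ∑ i, (S i).subtype ∘ₗ (s i) ∘ₗ (π i) with hsgdef
    have hsg_apply : ∀ v, sg v = ∑ i, (s i (π i v) : V) := by
      intro v
      simp [hsgdef, LinearMap.sum_apply]
    have hsg_pi : ∀ (i : Fin r) (v : V), π i (sg v) = s i (π i v) := by
      intro i v
      rw [hsg_apply, map_sum, Finset.sum_eq_single i]
      · rw [hπ_same]
      · intro j _ hji
        exact hπ_ne hji _
      · intro h; exact absurd (Finset.mem_univ i) h
    have hsg_e0 : ∀ v, sg (sg v) = e0 v := by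
      intro v
      rw [hsg_apply (sg v)]
      have h1 : ∀ i : Fin r, (s i (π i (sg v)) : V) = (ei i (π i v) : V) := by
        intro i
        rw [hsg_pi, ← Module.End.mul_apply, hss]
      rw [Finset.sum_congr rfl fun i _ => h1 i]
      have h2 : ∀ i : Fin r, (ei i (π i v) : V) = e0 ((π i v : V)) := fun i => hei_coe i _
      rw [Finset.sum_congr rfl fun i _ => h2 i]
      rw [← map_sum, hπ_sum]
    have hsg_bij : Function.Bijective sg := by
      constructor
      · intro x y h
        apply e0.injective
        rw [← hsg_e0, ← hsg_e0, h]
      · intro y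
        obtain ⟨x, hx⟩ := e0.surjective y
        exact ⟨sg x, by rw [hsg_e0, hx]⟩
    have hsgρ : ∀ g v, sg (ρ g v) = ρ g (sg v) := by
      intro g v
      rw [hsg_apply, hsg_apply, map_sum]
      refine Finset.sum_congr rfl fun i _ => ?_
      rw [hπ_ρ, hscomm]
      rfl
    have hiso : ∀ v w, B' (sg v) (sg w) = B v w := by
      intro v w
      have expand : ∀ (C : LinearMap.BilinForm K V),
          (∀ g v w, C (ρ g v) (ρ g w) = C v w) →
          ∀ (x : ∀ i : Fin r, ↥(S i)) (y : ∀ i : Fin r, ↥(S i)),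
          C (∑ i, ((x i : V))) (∑ i, ((y i : V))) = ∑ i, C (x i : V) (y i : V) := by
        intro C hC x y
        calc C (∑ i, ((x i : V))) (∑ i, ((y i : V)))
            = ∑ j, C (∑ i, ((x i : V))) ((y j : V)) := map_sum _ _ _
          _ = ∑ j, ∑ i, C ((x i : V)) ((y j : V)) := by
              refine Finset.sum_congr rfl fun j _ => ?_
              rw [map_sum C, LinearMap.sum_apply]
          _ = ∑ i, C ((x i : V)) ((y i : V)) := by
              refine Finset.sum_congr rfl fun j _ => ?_
              rw [Finset.sum_eq_single j]
              · intro i _ hij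
                exact horth C hC i j hij (x i) (y j)
              · intro h; exact absurd (Finset.mem_univ j) h
      rw [hsg_apply, hsg_apply]
      rw [expand B' hB'inv (fun i => s i (π i v)) (fun i => s i (π i w))]
      have hdiag : ∀ i : Fin r,
          B' (s i (π i v) : V) (s i (π i w) : V) = B ((π i v : V)) ((π i w : V)) := by
        intro i
        rw [← hssa i (s i (π i v)) (π i w)]
        rw [← Module.End.mul_apply, hss]
        exact hei_rel i _ _
      rw [Finset.sum_congr rfl fun i _ => hdiag i]
      conv_rhs => rw [← hπ_sum v, ← hπ_sum w]
      rw [expand B hBinv (fun i => π i v) (fun i => π i w)]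
    exact ⟨LinearEquiv.ofBijective sg hsg_bij, hsgρ, hiso⟩
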